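/- For all n ≥ 1 and k ≥ 0, the quantities a_{n,k}^{dasc}(132,213), a_{n,k}^{ddes}(132,213), a_{n,k}^{dasc}(213,231), and a_{n,k}^{ddes}(213,231) are all equal, and each equals the number of binary sequences of length n−1 with exactly k occurrences of 00 as a consecutive factor. -/

import Mathlib

open scoped Classical

/-- The word `π₁π₂⋯π_n` of a permutation of `{1,…,n}`, with values in `{1,…,n}`. -/
def permWord {n : ℕ} (π : Equiv.Perm (Fin n)) : List ℕ :=
  List.ofFn fun i => (π i : ℕ) + 1

/-- The word `l` contains the word `ρ` as a (classical) pattern. -/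
def ContainsPat (l ρ : List ℕ) : Prop :=
  ∃ f : Fin ρ.length → Fin l.length, StrictMono f ∧
    ∀ a b : Fin ρ.length, ρ.get a < ρ.get b ↔ l.get (f a) < l.get (f b)

/-- `l` avoids every pattern in the list `B`. -/
def AvoidsAll (l : List ℕ) (B : List (List ℕ)) : Prop :=
  ∀ ρ ∈ B, ¬ ContainsPat l ρ

/-- Number of ascents of the word `l`. -/
def ascents (l : List ℕ) : ℕ :=
  ((Finset.range (l.length - 1)).filter fun i => l.getD i 0 < l.getD (i + 1) 0).card

/-- Number of descents of the word `l`. -/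
def descents (l : List ℕ) : ℕ :=
  ((Finset.range (l.length - 1)).filter fun i => l.getD (i + 1) 0 < l.getD i 0).card

/-- Number of double ascents of the word `l`. -/
def dascents (l : List ℕ) : ℕ :=
  ((Finset.range (l.length - 2)).filter fun i =>
    l.getD i 0 < l.getD (i + 1) 0 ∧ l.getD (i + 1) 0 < l.getD (i + 2) 0).card

/-- Number of double descents of the word `l`. -/
def ddescents (l : List ℕ) : ℕ :=
  ((Finset.range (l.length - 2)).filter fun i =>
    l.getD (i + 1) 0 < l.getD i 0 ∧ l.getD (i + 2) 0 < l.getD (i + 1) 0).card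

/-- Number of peaks of the word `l`. -/
def peaks (l : List ℕ) : ℕ :=
  ((Finset.range (l.length - 2)).filter fun i =>
    l.getD i 0 < l.getD (i + 1) 0 ∧ l.getD (i + 2) 0 < l.getD (i + 1) 0).card

/-- Number of valleys of the word `l`. -/
def valleys (l : List ℕ) : ℕ :=
  ((Finset.range (l.length - 2)).filter fun i =>
    l.getD (i + 1) 0 < l.getD i 0 ∧ l.getD (i + 1) 0 < l.getD (i + 2) 0).card

/-- `acount n k stat B` is the number of permutations of `{1,…,n}` avoiding all
patterns in `B` whose statistic `stat` equals `k`. -/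
noncomputable def acount (n k : ℕ) (stat : List ℕ → ℕ) (B : List (List ℕ)) : ℕ :=
  (Finset.univ.filter fun π : Equiv.Perm (Fin n) =>
    AvoidsAll (permWord π) B ∧ stat (permWord π) = k).card

/-- The number of occurrences of `00` as a consecutive factor of a binary word
(`false` = 0, `true` = 1). -/
noncomputable def zzFactors (s : List Bool) : ℕ :=
  ((Finset.range (s.length - 1)).filter fun i =>
    s.getD i true = false ∧ s.getD (i + 1) true = false).card

/-- The number of binary sequences of length `m` with exactly `k` occurrences of `00`
as a consecutive factor. -/
noncomputable def binCount (m k : ℕ) : ℕ :=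
  (Finset.univ.filter fun s : Fin m → Bool => zzFactors (List.ofFn s) = k).card

namespace S10
variable {m : ℕ}

/-- extend a `Fin m`-indexed bool word to ℕ by `false`. -/
def sN (s : Fin m → Bool) : ℕ → Bool := fun j => if h : j < m then s ⟨j, h⟩ else false

/-- the permutation as a ℕ → ℕ function. -/
def pN (π : Equiv.Perm (Fin (m+1))) : ℕ → ℕ := fun i => if h : i < m+1 then (π ⟨i, h⟩ : ℕ) else 0

/-- descent word of a permutation. -/
def dW (π : Equiv.Perm (Fin (m+1))) : Fin m → Bool :=
  fun j => decide (pN π (j+1) < pN π j)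

lemma pN_eq (π : Equiv.Perm (Fin (m+1))) {i : ℕ} (h : i < m+1) : pN π i = (π ⟨i, h⟩ : ℕ) :=
  dif_pos h

lemma pN_lt (π : Equiv.Perm (Fin (m+1))) {i : ℕ} (h : i ≤ m) : pN π i < m+1 := by
  rw [pN_eq π (by omega)]; exact (π _).isLt

lemma pN_inj (π : Equiv.Perm (Fin (m+1))) {i j : ℕ} (hi : i ≤ m) (hj : j ≤ m)
    (h : pN π i = pN π j) : i = j := by
  rw [pN_eq π (by omega : i < m+1), pN_eq π (by omega : j < m+1)] at h
  have := π.injective (Fin.val_injective h)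
  simpa [Fin.ext_iff] using this

lemma permWord_length (π : Equiv.Perm (Fin (m+1))) : (permWord π).length = m+1 := by
  simp [permWord]



lemma permWord_get (π : Equiv.Perm (Fin (m+1))) (x : Fin (permWord π).length) :
    (permWord π).get x = pN π ↑x + 1 := by
  have hx : (x : ℕ) < m + 1 := by simpa [permWord] using x.isLt
  rw [pN_eq π hx]
  unfold permWord
  show (List.ofFn fun i => (π i : ℕ) + 1)[(x : ℕ)]'(by simpa using hx) = _
  exact List.getElem_ofFn ..

lemma permWord_getD (π : Equiv.Perm (Fin (m+1))) {i : ℕ} (h : i < m+1) :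
    (permWord π).getD i 0 = pN π i + 1 := by
  rw [List.getD_eq_getElem _ _ (by rw [permWord_length]; omega)]
  rw [pN_eq π h]
  unfold permWord
  rw [List.getElem_ofFn]

lemma sN_eq (s : Fin m → Bool) {j : ℕ} (h : j < m) : sN s j = s ⟨j, h⟩ := dif_pos h

lemma sN_dW_true (π : Equiv.Perm (Fin (m+1))) {j : ℕ} (h : j < m) :
    sN (dW π) j = true ↔ pN π (j+1) < pN π j := by
  rw [sN_eq _ h]; simp [dW]

lemma sN_dW_false (π : Equiv.Perm (Fin (m+1))) {j : ℕ} (h : j < m) :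
    sN (dW π) j = false ↔ pN π j < pN π (j+1) := by
  rw [sN_eq _ h]; simp only [dW, decide_eq_false_iff_not, not_lt]
  constructor
  · intro hle
    rcases lt_or_eq_of_le hle with h' | h'
    · exact h'
    · exact absurd (pN_inj π (by omega) (by omega) h') (by omega)
  · omega

lemma getD_ofFn (f : Fin m → Bool) {i : ℕ} (h : i < m) :
    (List.ofFn f).getD i true = f ⟨i, h⟩ := by
  rw [List.getD_eq_getElem _ _ (by simpa using h)]
  simp

lemma zz_ofFn (s : Fin m → Bool) :
    zzFactors (List.ofFn s) =
      ((Finset.range (m-1)).filter fun i => sN s i = false ∧ sN s (i+1) = false).card := by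
  unfold zzFactors
  rw [List.length_ofFn]
  congr 1
  apply Finset.filter_congr
  intro i hi
  simp only [Finset.mem_range] at hi
  rw [getD_ofFn s (by omega), getD_ofFn s (by omega), sN_eq s (by omega : i < m),
    sN_eq s (by omega : i + 1 < m)]

lemma dasc_eq (π : Equiv.Perm (Fin (m+1))) :
    dascents (permWord π) = zzFactors (List.ofFn (dW π)) := by
  rw [zz_ofFn]
  unfold dascents
  rw [permWord_length]
  have hr : m + 1 - 2 = m - 1 := by omega
  rw [hr]
  congr 1
  apply Finset.filter_congr
  intro i hi
  simp only [Finset.mem_range] at hi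
  rw [permWord_getD π (by omega : i < m+1), permWord_getD π (by omega : i+1 < m+1),
    permWord_getD π (by omega : i+2 < m+1)]
  rw [sN_dW_false π (by omega : i < m), sN_dW_false π (by omega : i + 1 < m)]
  have hq : pN π (i+1+1) = pN π (i+2) := by norm_num
  rw [hq]
  constructor <;> intro ⟨u, v⟩ <;> exact ⟨by omega, by omega⟩

lemma ddesc_eq (π : Equiv.Perm (Fin (m+1))) :
    ddescents (permWord π) = zzFactors (List.ofFn (fun j => ! dW π j)) := by
  rw [zz_ofFn]
  unfold ddescents
  rw [permWord_length]
  have hr : m + 1 - 2 = m - 1 := by omega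
  rw [hr]
  congr 1
  apply Finset.filter_congr
  intro i hi
  simp only [Finset.mem_range] at hi
  rw [permWord_getD π (by omega : i < m+1), permWord_getD π (by omega : i+1 < m+1),
    permWord_getD π (by omega : i+2 < m+1)]
  have e1 : sN (fun j => ! dW π j) i = ! sN (dW π) i := by
    rw [sN_eq _ (by omega : i < m), sN_eq _ (by omega : i < m)]
  have e2 : sN (fun j => ! dW π j) (i+1) = ! sN (dW π) (i+1) := by
    rw [sN_eq _ (by omega : i+1 < m), sN_eq _ (by omega : i+1 < m)]
  rw [e1, e2, Bool.not_eq_false', Bool.not_eq_false',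
    sN_dW_true π (by omega : i < m), sN_dW_true π (by omega : i + 1 < m)]
  have hq : pN π (i+1+1) = pN π (i+2) := by norm_num
  rw [hq]
  constructor <;> intro ⟨u, v⟩ <;> exact ⟨by omega, by omega⟩

lemma finCard (N : ℕ) (Q : ℕ → Prop) [DecidablePred Q] :
    (Finset.univ.filter fun j : Fin N => Q ↑j).card = ((Finset.range N).filter Q).card := by
  refine Finset.card_bij (fun j _ => (j : ℕ)) ?_ ?_ ?_
  · intro a ha
    simp only [Finset.mem_filter, Finset.mem_univ, true_and] at ha
    exact Finset.mem_filter.2 ⟨Finset.mem_range.2 a.isLt, ha⟩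
  · intro a _ b _ h; exact Fin.val_injective h
  · intro b hb
    simp only [Finset.mem_filter, Finset.mem_range] at hb
    exact ⟨⟨b, hb.1⟩, by simp [hb.2], rfl⟩

lemma card_lt (π : Equiv.Perm (Fin (m+1))) {i : ℕ} (h : i ≤ m) :
    pN π i = (Finset.univ.filter fun j : Fin (m+1) => (π j : ℕ) < pN π i).card := by
  have h1 : i < m + 1 := by omega
  conv_lhs => rw [pN_eq π h1, ← Fin.card_Iio (π ⟨i, h1⟩)]
  refine Finset.card_bij (fun x _ => π.symm x) ?_ ?_ ?_
  · intro x hx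
    have hx' : (x : ℕ) < (π ⟨i, h1⟩ : ℕ) := Fin.lt_def.1 (Finset.mem_Iio.1 hx)
    have : (π (π.symm x) : ℕ) < pN π i := by
      rw [Equiv.apply_symm_apply, pN_eq π h1]; exact hx'
    exact Finset.mem_filter.2 ⟨Finset.mem_univ _, this⟩
  · intro x _ y _ hxy; exact π.symm.injective hxy
  · intro j hj
    have hj' : (π j : ℕ) < pN π i := (Finset.mem_filter.1 hj).2
    rw [pN_eq π h1] at hj'
    exact ⟨π j, Finset.mem_Iio.2 (Fin.lt_def.2 hj'), π.symm_apply_apply j⟩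

section mk
variable (π : Equiv.Perm (Fin (m+1))) {i j k : ℕ}

lemma mk132 (hij : i < j) (hjk : j < k) (hk : k ≤ m)
    (h1 : pN π i < pN π k) (h2 : pN π k < pN π j) :
    ContainsPat (permWord π) [1,3,2] := by
  have hlen := permWord_length π
  refine ⟨fun a => ⟨if (a:ℕ) = 0 then i else if (a:ℕ) = 1 then j else k,
      by rw [hlen]; split_ifs <;> omega⟩, ?_, ?_⟩
  · intro a b hab
    have ha := a.isLt; have hb := b.isLt
    simp only [List.length_cons, List.length_nil] at ha hb
    simp only [Fin.lt_def] at hab ⊢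
    split_ifs <;> omega
  · intro a b
    rw [permWord_get, permWord_get]
    fin_cases a <;> fin_cases b <;> simp <;> omega

lemma mk213 (hij : i < j) (hjk : j < k) (hk : k ≤ m)
    (h1 : pN π j < pN π i) (h2 : pN π i < pN π k) :
    ContainsPat (permWord π) [2,1,3] := by
  have hlen := permWord_length π
  refine ⟨fun a => ⟨if (a:ℕ) = 0 then i else if (a:ℕ) = 1 then j else k,
      by rw [hlen]; split_ifs <;> omega⟩, ?_, ?_⟩
  · intro a b hab
    have ha := a.isLt; have hb := b.isLt
    simp only [List.length_cons, List.length_nil] at ha hb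
    simp only [Fin.lt_def] at hab ⊢
    split_ifs <;> omega
  · intro a b
    rw [permWord_get, permWord_get]
    fin_cases a <;> fin_cases b <;> simp <;> omega

lemma mk231 (hij : i < j) (hjk : j < k) (hk : k ≤ m)
    (h1 : pN π k < pN π i) (h2 : pN π i < pN π j) :
    ContainsPat (permWord π) [2,3,1] := by
  have hlen := permWord_length π
  refine ⟨fun a => ⟨if (a:ℕ) = 0 then i else if (a:ℕ) = 1 then j else k,
      by rw [hlen]; split_ifs <;> omega⟩, ?_, ?_⟩
  · intro a b hab
    have ha := a.isLt; have hb := b.isLt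
    simp only [List.length_cons, List.length_nil] at ha hb
    simp only [Fin.lt_def] at hab ⊢
    split_ifs <;> omega
  · intro a b
    rw [permWord_get, permWord_get]
    fin_cases a <;> fin_cases b <;> simp <;> omega

end mk
section steps
variable (π : Equiv.Perm (Fin (m+1)))

lemma pN_symm (x : Fin (m+1)) : pN π ↑(π.symm x) = ↑x := by
  rw [pN_eq π (π.symm x).isLt]
  simp

/-- In an avoider of 132 and 213, every ascent ascends by exactly 1. -/
lemma L1 (hA : AvoidsAll (permWord π) [[1,3,2],[2,1,3]]) {i : ℕ} (h : i + 1 ≤ m)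
    (hasc : pN π i < pN π (i+1)) : pN π (i+1) = pN π i + 1 := by
  by_contra hne
  have hv : pN π i + 1 < m + 1 := by have := pN_lt π h; omega
  set j : ℕ := ↑(π.symm ⟨pN π i + 1, hv⟩) with hjdef
  have hpj : pN π j = pN π i + 1 := pN_symm π _
  have hjm : j ≤ m := by have := (π.symm ⟨pN π i + 1, hv⟩).isLt; omega
  have hji : j ≠ i := by intro e; rw [e] at hpj; omega
  have hji1 : j ≠ i + 1 := by intro e; rw [e] at hpj; omega
  rcases lt_trichotomy j i with hlt | heq | hgt
  · exact hA [2,1,3] (by simp)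
      (mk213 π hlt (by omega : i < i + 1) h (by omega) (by omega))
  · exact hji heq
  · have : i + 1 < j := by omega
    exact hA [1,3,2] (by simp)
      (mk132 π (by omega : i < i + 1) this hjm (by omega) (by omega))

lemma L2aux (hA : AvoidsAll (permWord π) [[1,3,2],[2,1,3]]) :
    ∀ g i d k : ℕ, k - i ≤ g → i ≤ d → d < k → k ≤ m → pN π (d+1) < pN π d →
      pN π k < pN π i := by
  intro g
  induction g with
  | zero => intro i d k h1 h2 h3 h4 _; omega
  | succ g ih =>
    intro i d k hg hid hdk hkm hdesc
    by_contra hnlt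
    have hik : i < k := by omega
    have hne : pN π k ≠ pN π i := fun e => by have := pN_inj π hkm (by omega) e; omega
    have hlt : pN π i < pN π k := by omega
    by_cases hmid : ∃ t, i < t ∧ t < k ∧ pN π t < pN π i
    · obtain ⟨t, ht1, ht2, ht3⟩ := hmid
      exact hA [2,1,3] (by simp) (mk213 π ht1 ht2 hkm ht3 hlt)
    · push_neg at hmid
      have hdi : i < d := by
        rcases Nat.eq_or_lt_of_le hid with e | l
        · exfalso
          rw [← e] at hdesc
          rcases Nat.lt_or_ge (i+1) k with hc | hc
          · exact absurd hdesc (by have := hmid (i+1) (by omega) hc; omega)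
          · have : i + 1 = k := by omega
            rw [this] at hdesc; omega
        · exact l
      have hi1k : i + 1 < k := by omega
      have hi1m : i + 1 ≤ m := by omega
      have hasc : pN π i < pN π (i+1) := by
        have hne2 : pN π (i+1) ≠ pN π i := fun e => by
          have := pN_inj π (by omega : i+1 ≤ m) (by omega : i ≤ m) e; omega
        have := hmid (i+1) (by omega) hi1k
        omega
      have hstep := L1 π hA hi1m hasc
      have h2 : pN π (i+1) < pN π k := by
        have : pN π (i+1) ≠ pN π k := fun e => by
          have := pN_inj π (by omega : i+1 ≤ m) hkm e; omega
        omega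
      exact absurd (ih (i+1) d k (by omega) (by omega) hdk hkm hdesc) (by omega)

/-- descent propagation: a descent between `i` and `k` forces `π k < π i`. -/
lemma L2 (hA : AvoidsAll (permWord π) [[1,3,2],[2,1,3]]) {i d k : ℕ}
    (h1 : i ≤ d) (h2 : d < k) (h3 : k ≤ m) (hdesc : pN π (d+1) < pN π d) :
    pN π k < pN π i :=
  L2aux π hA k i d k (by omega) h1 h2 h3 hdesc

/-- along an all-ascent stretch the values go up by exactly 1. -/
lemma L3 (hA : AvoidsAll (permWord π) [[1,3,2],[2,1,3]]) {i j : ℕ} (hij : i ≤ j) (hjm : j ≤ m)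
    (hasc : ∀ d, i ≤ d → d < j → pN π d < pN π (d+1)) : pN π j = pN π i + (j - i) := by
  induction j, hij using Nat.le_induction with
  | base => simp
  | succ j hij ih =>
    have h1 : pN π j < pN π (j+1) := hasc j hij (by omega)
    have h2 := L1 π hA (by omega) h1
    have h3 := ih (by omega) (fun d hd1 hd2 => hasc d hd1 (by omega))
    omega

end steps

section class1
variable (s : Fin m → Bool)

lemma sN_true_lt {s : Fin m → Bool} {d : ℕ} (h : sN s d = true) : d < m := by
  by_contra hc
  rw [sN, dif_neg (by omega)] at h
  exact Bool.false_ne_true h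

noncomputable def Ee (s : Fin m → Bool) (i : ℕ) : ℕ :=
  if h : ∃ d, i ≤ d ∧ sN s d = true then Nat.find h else m

lemma Ee_ge {i : ℕ} (him : i ≤ m) : i ≤ Ee s i := by
  unfold Ee; split
  · rename_i h; exact (Nat.find_spec h).1
  · exact him

lemma Ee_le {i : ℕ} : Ee s i ≤ m := by
  unfold Ee; split
  · rename_i h; exact le_of_lt (sN_true_lt (Nat.find_spec h).2)
  · exact le_refl m

lemma Ee_false {i d : ℕ} (h1 : i ≤ d) (h2 : d < Ee s i) : sN s d = false := by
  unfold Ee at h2; split at h2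
  · rename_i hex
    have := Nat.find_min hex h2
    simp only [not_and] at this
    simpa using this h1
  · rename_i h
    push_neg at h
    simpa using h d h1

lemma Ee_true {i : ℕ} (h : Ee s i < m) : sN s (Ee s i) = true := by
  by_cases hex : ∃ d, i ≤ d ∧ sN s d = true
  · rw [Ee, dif_pos hex] at h ⊢
    exact (Nat.find_spec hex).2
  · rw [Ee, dif_neg hex] at h; omega

lemma Ee_min {i d : ℕ} (hd : i ≤ d) (hs : sN s d = true) : Ee s i ≤ d := by
  have hex : ∃ d', i ≤ d' ∧ sN s d' = true := ⟨d, hd, hs⟩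
  unfold Ee; rw [dif_pos hex]
  exact Nat.find_le ⟨hd, hs⟩

noncomputable def Bb (s : Fin m → Bool) (i : ℕ) : ℕ :=
  Nat.findGreatest (fun b => b = 0 ∨ sN s (b-1) = true) i

lemma Bb_le {i : ℕ} : Bb s i ≤ i := Nat.findGreatest_le i

lemma Bb_false {i d : ℕ} (h1 : Bb s i ≤ d) (h2 : d < i) : sN s d = false := by
  have := Nat.findGreatest_is_greatest (P := fun b => b = 0 ∨ sN s (b-1) = true)
    (show Bb s i < d + 1 by omega) (by omega : d + 1 ≤ i)
  simp only [Nat.add_sub_cancel] at this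
  push_neg at this
  simpa using this.2

lemma Bb_spec (i : ℕ) : Bb s i = 0 ∨ sN s (Bb s i - 1) = true :=
  Nat.findGreatest_spec (P := fun b => b = 0 ∨ sN s (b-1) = true) (Nat.zero_le i) (Or.inl rfl)

lemma Bb_max {i b : ℕ} (hb : b ≤ i) (hP : b = 0 ∨ sN s (b-1) = true) : b ≤ Bb s i :=
  Nat.le_findGreatest hb hP

lemma Ee_congr {i j : ℕ} (hij : i ≤ j) (hje : j ≤ Ee s i) : Ee s j = Ee s i := by
  have hjm : j ≤ m := le_trans hje (Ee_le s)
  apply le_antisymm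
  · by_cases hEm : Ee s i < m
    · exact Ee_min s hje (Ee_true s hEm)
    · have h1 : Ee s i = m := by have := Ee_le s (i := i); omega
      rw [h1]; exact Ee_le s
  · by_contra hc
    push_neg at hc
    have hd1 : j ≤ Ee s j := Ee_ge s hjm
    have hd2 : sN s (Ee s j) = true := Ee_true s (by have := Ee_le s (i := i); omega)
    have := Ee_false s (show i ≤ Ee s j by omega) hc
    rw [this] at hd2; exact Bool.false_ne_true hd2

lemma Bb_congr {i j : ℕ} (hij : i ≤ j) (hje : j ≤ Ee s i) : Bb s j = Bb s i := by
  apply le_antisymm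
  · by_contra hc
    push_neg at hc
    rcases Bb_spec s j with h0 | hs1
    · omega
    · rcases Nat.lt_or_ge i (Bb s j) with hcase | hcase
      · have h1 : i ≤ Bb s j - 1 := by omega
        have h2 : Bb s j - 1 < Ee s i := by have := Bb_le s (i := j); omega
        rw [Ee_false s h1 h2] at hs1; exact Bool.false_ne_true hs1
      · have := Bb_max s hcase (Bb_spec s j)
        omega
  · exact Bb_max s (le_trans (Bb_le s) hij) (Bb_spec s i)

noncomputable def v1 (s : Fin m → Bool) (i : ℕ) : ℕ := (m - Ee s i) + (i - Bb s i)

lemma key1a {i j : ℕ} (hij : i < j) (hje : j ≤ Ee s i) : v1 s i < v1 s j := by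
  have e := Ee_congr s (le_of_lt hij) hje
  have b := Bb_congr s (le_of_lt hij) hje
  have hbi := Bb_le s (i := i)
  unfold v1; rw [e, b]; omega

lemma key1b {i j : ℕ} (hij : i < j) (hje : Ee s i < j) (hjm : j ≤ m) : v1 s j < v1 s i := by
  have hEm : Ee s i < m := lt_of_lt_of_le hje hjm
  have hBj : Ee s i + 1 ≤ Bb s j := by
    apply Bb_max s (by omega)
    right
    simpa using Ee_true s hEm
  have h1 : j ≤ Ee s j := Ee_ge s hjm
  have h2 : Ee s j ≤ m := Ee_le s
  have h3 : Bb s j ≤ j := Bb_le s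
  have h4 : i ≤ Ee s i := Ee_ge s (by omega)
  have h5 : Bb s i ≤ i := Bb_le s
  unfold v1; omega

lemma v1_le {i : ℕ} (him : i ≤ m) : v1 s i ≤ m := by
  have h1 := Ee_ge s him
  have h2 := Ee_le s (i := i)
  have h3 := Bb_le s (i := i)
  unfold v1; omega

noncomputable def G1 (s : Fin m → Bool) : Equiv.Perm (Fin (m+1)) :=
  Equiv.ofBijective
    (fun i => ⟨v1 s ↑i, by have := v1_le s (show (i:ℕ) ≤ m by omega); omega⟩)
    (Finite.injective_iff_bijective.1 (by
      intro a b hab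
      have hab' : v1 s ↑a = v1 s ↑b := by simpa [Fin.ext_iff] using hab
      by_contra hne
      have hne' : (a : ℕ) ≠ (b : ℕ) := fun e => hne (Fin.val_injective e)
      have key : ∀ x y : Fin (m+1), (x:ℕ) < (y:ℕ) → v1 s ↑x ≠ v1 s ↑y := by
        intro x y hxy
        rcases le_or_gt (y:ℕ) (Ee s ↑x) with hc | hc
        · exact Nat.ne_of_lt (key1a s hxy hc)
        · exact (Nat.ne_of_lt (key1b s hxy hc (by omega))).symm
      rcases Nat.lt_or_ge (a:ℕ) (b:ℕ) with hc | hc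
      · exact key a b hc hab'
      · exact key b a (by omega) hab'.symm))

lemma pN_G1 {i : ℕ} (h : i ≤ m) : pN (G1 s) i = v1 s i := by
  rw [pN_eq _ (by omega : i < m+1)]
  rfl

lemma dW_G1 : dW (G1 s) = s := by
  funext j
  have hj := j.isLt
  have hs : sN s ↑j = s j := by rw [sN_eq s hj]
  unfold dW
  rw [pN_G1 s (by omega), pN_G1 s (by omega)]
  by_cases hc : s j = true
  · have hE : Ee s ↑j = ↑j :=
      le_antisymm (Ee_min s (le_refl _) (by rw [hs]; exact hc)) (Ee_ge s (by omega))
    have := key1b s (Nat.lt_succ_self (j:ℕ)) (by omega) (by omega)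
    simp [this, hc]
  · have hcf : s j = false := by simpa using hc
    have hE : (j:ℕ) + 1 ≤ Ee s ↑j := by
      have h1 := Ee_ge s (show (j:ℕ) ≤ m by omega)
      rcases Nat.eq_or_lt_of_le h1 with e | l
      · exfalso
        have := Ee_true s (i := ↑j) (by omega)
        rw [← e, hs, hcf] at this
        exact Bool.false_ne_true this
      · omega
    have := key1a s (Nat.lt_succ_self (j:ℕ)) hE
    simp [Nat.not_lt_of_lt this, hcf]


lemma not132v1 {i j k : ℕ} (hij : i < j) (hjk : j < k) (hkm : k ≤ m)
    (h1 : v1 s i < v1 s k) (h2 : v1 s k < v1 s j) : False := by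
  have hkE : k ≤ Ee s i := by
    by_contra hc
    exact absurd h1 (by have := key1b s (by omega : i < k) (by omega) hkm; omega)
  have hEj : Ee s j = Ee s i := Ee_congr s (by omega) (by omega)
  have := key1a s hjk (by omega : k ≤ Ee s j)
  omega

lemma not213v1 {i j k : ℕ} (hij : i < j) (hjk : j < k) (hkm : k ≤ m)
    (h1 : v1 s j < v1 s i) (h2 : v1 s i < v1 s k) : False := by
  have hkE : k ≤ Ee s i := by
    by_contra hc
    exact absurd h2 (by have := key1b s (by omega : i < k) (by omega) hkm; omega)
  have := key1a s hij (by omega : j ≤ Ee s i)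
  omega

lemma G1_avoids : AvoidsAll (permWord (G1 s)) [[1,3,2],[2,1,3]] := by
  intro ρ hρ hC
  obtain ⟨f, hmono, hiff⟩ := hC
  simp only [List.mem_cons, List.not_mem_nil, or_false] at hρ
  have hlen := permWord_length (G1 s)
  rcases hρ with h | h <;> subst h
  · have h01 : (↑(f ⟨0, by norm_num⟩) : ℕ) < ↑(f ⟨1, by norm_num⟩) :=
      hmono (show (⟨0, by norm_num⟩ : Fin ([1,3,2] : List ℕ).length) < ⟨1, by norm_num⟩ by
        simp [Fin.lt_def])
    have h12 : (↑(f ⟨1, by norm_num⟩) : ℕ) < ↑(f ⟨2, by norm_num⟩) :=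
      hmono (show (⟨1, by norm_num⟩ : Fin ([1,3,2] : List ℕ).length) < ⟨2, by norm_num⟩ by
        simp [Fin.lt_def])
    have hm0 : (↑(f ⟨0, by norm_num⟩) : ℕ) ≤ m := by
      have := (f ⟨0, by norm_num⟩).isLt; omega
    have hm1 : (↑(f ⟨1, by norm_num⟩) : ℕ) ≤ m := by
      have := (f ⟨1, by norm_num⟩).isLt; omega
    have hm2 : (↑(f ⟨2, by norm_num⟩) : ℕ) ≤ m := by
      have := (f ⟨2, by norm_num⟩).isLt; omega
    have hik : pN (G1 s) ↑(f ⟨0, by norm_num⟩) < pN (G1 s) ↑(f ⟨2, by norm_num⟩) := by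
      have := (hiff ⟨0, by norm_num⟩ ⟨2, by norm_num⟩).1 (by decide)
      rw [permWord_get, permWord_get] at this
      omega
    have hkj : pN (G1 s) ↑(f ⟨2, by norm_num⟩) < pN (G1 s) ↑(f ⟨1, by norm_num⟩) := by
      have := (hiff ⟨2, by norm_num⟩ ⟨1, by norm_num⟩).1 (by decide)
      rw [permWord_get, permWord_get] at this
      omega
    rw [pN_G1 s hm0, pN_G1 s hm2] at hik
    rw [pN_G1 s hm2, pN_G1 s hm1] at hkj
    exact not132v1 s h01 h12 hm2 hik hkj
  · have h01 : (↑(f ⟨0, by norm_num⟩) : ℕ) < ↑(f ⟨1, by norm_num⟩) :=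
      hmono (show (⟨0, by norm_num⟩ : Fin ([2,1,3] : List ℕ).length) < ⟨1, by norm_num⟩ by
        simp [Fin.lt_def])
    have h12 : (↑(f ⟨1, by norm_num⟩) : ℕ) < ↑(f ⟨2, by norm_num⟩) :=
      hmono (show (⟨1, by norm_num⟩ : Fin ([2,1,3] : List ℕ).length) < ⟨2, by norm_num⟩ by
        simp [Fin.lt_def])
    have hm0 : (↑(f ⟨0, by norm_num⟩) : ℕ) ≤ m := by
      have := (f ⟨0, by norm_num⟩).isLt; omega
    have hm1 : (↑(f ⟨1, by norm_num⟩) : ℕ) ≤ m := by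
      have := (f ⟨1, by norm_num⟩).isLt; omega
    have hm2 : (↑(f ⟨2, by norm_num⟩) : ℕ) ≤ m := by
      have := (f ⟨2, by norm_num⟩).isLt; omega
    have hji : pN (G1 s) ↑(f ⟨1, by norm_num⟩) < pN (G1 s) ↑(f ⟨0, by norm_num⟩) := by
      have := (hiff ⟨1, by norm_num⟩ ⟨0, by norm_num⟩).1 (by decide)
      rw [permWord_get, permWord_get] at this
      omega
    have hik : pN (G1 s) ↑(f ⟨0, by norm_num⟩) < pN (G1 s) ↑(f ⟨2, by norm_num⟩) := by
      have := (hiff ⟨0, by norm_num⟩ ⟨2, by norm_num⟩).1 (by decide)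
      rw [permWord_get, permWord_get] at this
      omega
    rw [pN_G1 s hm1, pN_G1 s hm0] at hji
    rw [pN_G1 s hm0, pN_G1 s hm2] at hik
    exact not213v1 s h01 h12 hm2 hji hik

lemma charac1 (π : Equiv.Perm (Fin (m+1))) (hA : AvoidsAll (permWord π) [[1,3,2],[2,1,3]])
    {i j : ℕ} (hi : i ≤ m) (hj : j ≤ m) :
    pN π j < pN π i ↔ ((Bb (dW π) i ≤ j ∧ j < i) ∨ (Ee (dW π) i < j)) := by
  constructor
  · intro h
    by_contra hc
    push_neg at hc
    obtain ⟨hc1, hc2⟩ := hc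
    rcases lt_trichotomy j i with hji | hji | hji
    · have hBb : j < Bb (dW π) i := by
        rcases Nat.lt_or_ge j (Bb (dW π) i) with h' | h'
        · exact h'
        · exact absurd hji (by simpa using hc1 h')
      have hB1 : 1 ≤ Bb (dW π) i := by omega
      have hsB : sN (dW π) (Bb (dW π) i - 1) = true :=
        (Bb_spec (dW π) i).resolve_left (by omega)
      have hdesc : pN π (Bb (dW π) i - 1 + 1) < pN π (Bb (dW π) i - 1) := by
        rw [← sN_dW_true π (show Bb (dW π) i - 1 < m by
          have := Bb_le (dW π) (i := i); omega)]
        exact hsB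
      exact absurd (L2 π hA (show j ≤ Bb (dW π) i - 1 by omega)
        (show Bb (dW π) i - 1 < i by have := Bb_le (dW π) (i := i); omega) hi hdesc) (by omega)
    · exact absurd h (by rw [hji]; exact lt_irrefl _)
    · have hje : j ≤ Ee (dW π) i := by omega
      have hasc : ∀ d, i ≤ d → d < j → pN π d < pN π (d+1) := by
        intro d hd1 hd2
        rw [← sN_dW_false π (show d < m by omega)]
        exact Ee_false (dW π) hd1 (by omega)
      have := L3 π hA (by omega : i ≤ j) hj hasc
      omega
  · intro h
    rcases h with ⟨hbj, hji⟩ | hEj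
    · have hasc : ∀ d, j ≤ d → d < i → pN π d < pN π (d+1) := by
        intro d hd1 hd2
        rw [← sN_dW_false π (show d < m by omega)]
        exact Bb_false (dW π) (by omega) hd2
      have := L3 π hA (by omega : j ≤ i) hi hasc
      omega
    · have hEm : Ee (dW π) i < m := by omega
      have hdesc : pN π (Ee (dW π) i + 1) < pN π (Ee (dW π) i) := by
        rw [← sN_dW_true π hEm]
        exact Ee_true (dW π) hEm
      exact L2 π hA (Ee_ge (dW π) hi) hEj hj hdesc

lemma classKey1 (π : Equiv.Perm (Fin (m+1))) (hA : AvoidsAll (permWord π) [[1,3,2],[2,1,3]]) :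
    π = G1 (dW π) := by
  have main : ∀ i : ℕ, i ≤ m → pN π i = v1 (dW π) i := by
    intro i hi
    rw [card_lt π hi]
    have hfe : (Finset.univ.filter fun x : Fin (m+1) => (π x : ℕ) < pN π i) =
        (Finset.univ.filter fun x : Fin (m+1) =>
          (Bb (dW π) i ≤ ↑x ∧ ↑x < i) ∨ (Ee (dW π) i < ↑x)) := by
      apply Finset.filter_congr
      intro x _
      have hx : (π x : ℕ) = pN π ↑x := by
        rw [pN_eq π x.isLt]
      rw [hx]
      have := charac1 π hA hi (show (x:ℕ) ≤ m by have := x.isLt; omega)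
      simp [this]
    rw [hfe, finCard (m+1) (fun t => (Bb (dW π) i ≤ t ∧ t < i) ∨ (Ee (dW π) i < t))]
    have hEge := Ee_ge (dW π) hi
    have hEle := Ee_le (dW π) (i := i)
    have hBle := Bb_le (dW π) (i := i)
    have hset : (Finset.range (m+1)).filter
          (fun t => (Bb (dW π) i ≤ t ∧ t < i) ∨ (Ee (dW π) i < t)) =
        Finset.Ico (Bb (dW π) i) i ∪ Finset.Ico (Ee (dW π) i + 1) (m+1) := by
      ext t
      simp only [Finset.mem_filter, Finset.mem_range, Finset.mem_Ico, Finset.mem_union]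
      omega
    rw [hset, Finset.card_union_of_disjoint, Nat.card_Ico, Nat.card_Ico]
    · unfold v1; omega
    · rw [Finset.disjoint_left]
      intro t ht1 ht2
      simp only [Finset.mem_Ico] at ht1 ht2
      omega
  apply Equiv.ext
  intro x
  apply Fin.val_injective
  have hx := main ↑x (by have := x.isLt; omega)
  rw [pN_eq π x.isLt] at hx
  rw [hx]
  rfl

end class1

section class2
variable (s : Fin m → Bool)

noncomputable def dc (s : Fin m → Bool) (i : ℕ) : ℕ :=
  ((Finset.range i).filter fun j => sN s j = true).card

lemma dc_le {i : ℕ} : dc s i ≤ i :=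
  le_trans (Finset.card_filter_le _ _) (by simp)

lemma dc_split {i j : ℕ} (h : i ≤ j) :
    dc s j = dc s i + ((Finset.Ico i j).filter fun t => sN s t = true).card := by
  unfold dc
  rw [Finset.range_eq_Ico,
    ← Finset.Ico_union_Ico_eq_Ico (Nat.zero_le i) h, Finset.filter_union,
    Finset.card_union_of_disjoint]
  · rw [Finset.range_eq_Ico]
  rw [Finset.disjoint_left]
  intro t ht1 ht2
  simp only [Finset.mem_filter, Finset.mem_Ico] at ht1 ht2
  omega

lemma dc_mono {i j : ℕ} (h : i ≤ j) : dc s i ≤ dc s j := by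
  rw [dc_split s h]; omega

lemma dc_add {i j : ℕ} (h : i ≤ j) : dc s j ≤ dc s i + (j - i) := by
  rw [dc_split s h]
  have := Finset.card_filter_le (Finset.Ico i j) (fun t => sN s t = true)
  rw [Nat.card_Ico] at this
  omega

lemma dc_desc {i j : ℕ} (h : i < j) (hs : sN s i = true) : dc s i + 1 ≤ dc s j := by
  rw [dc_split s (le_of_lt h)]
  have : ({i} : Finset ℕ) ⊆ (Finset.Ico i j).filter fun t => sN s t = true := by
    intro t ht
    simp only [Finset.mem_singleton] at ht
    subst ht
    simp only [Finset.mem_filter, Finset.mem_Ico]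
    exact ⟨⟨le_refl _, h⟩, hs⟩
  have := Finset.card_le_card this
  simp only [Finset.card_singleton] at this
  omega

lemma dc_asc {i j : ℕ} (h : i < j) (hs : sN s i = false) : dc s j + 1 ≤ dc s i + (j - i) := by
  rw [dc_split s (le_of_lt h)]
  have hsub : ((Finset.Ico i j).filter fun t => sN s t = true) ⊆ Finset.Ico (i+1) j := by
    intro t ht
    simp only [Finset.mem_filter, Finset.mem_Ico] at ht
    simp only [Finset.mem_Ico]
    rcases Nat.eq_or_lt_of_le ht.1.1 with e | l
    · exfalso; rw [← e] at ht; rw [ht.2] at hs; exact absurd hs (by simp)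
    · exact ⟨l, ht.1.2⟩
  have := Finset.card_le_card hsub
  rw [Nat.card_Ico] at this
  omega

noncomputable def v2 (s : Fin m → Bool) (i : ℕ) : ℕ :=
  if i < m ∧ sN s i = true then m - dc s i else i - dc s i

lemma v2_ub {i : ℕ} (h : i ≤ m) : v2 s i ≤ m - dc s i := by
  unfold v2; split_ifs
  · exact le_refl _
  · omega

lemma v2_lb {i : ℕ} (h : i ≤ m) : i - dc s i ≤ v2 s i := by
  unfold v2; split_ifs <;> omega

lemma v2_le {i : ℕ} (h : i ≤ m) : v2 s i ≤ m := by
  have := dc_le s (i := i); unfold v2; split_ifs <;> omega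

lemma key2a {i j : ℕ} (hij : i < j) (hjm : j ≤ m) (hd : i < m ∧ sN s i = true) :
    v2 s j < v2 s i := by
  have h1 := dc_desc s hij hd.2
  have h2 := dc_le s (i := j)
  have h3 := v2_ub s hjm
  have h4 : v2 s i = m - dc s i := if_pos hd
  omega

lemma key2b {i j : ℕ} (hij : i < j) (hjm : j ≤ m) (hd : ¬(i < m ∧ sN s i = true)) :
    v2 s i < v2 s j := by
  have him : i < m := by omega
  have hsf : sN s i = false := by
    rcases Bool.eq_false_or_eq_true (sN s i) with h | h
    · exact absurd ⟨him, h⟩ hd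
    · exact h
  have h1 := dc_asc s hij hsf
  have h2 := v2_lb s hjm
  have h3 : v2 s i = i - dc s i := if_neg hd
  have h4 := dc_le s (i := i)
  have h5 := dc_mono s (le_of_lt hij)
  omega

noncomputable def G2 (s : Fin m → Bool) : Equiv.Perm (Fin (m+1)) :=
  Equiv.ofBijective
    (fun i => ⟨v2 s ↑i, by have := v2_le s (show (i:ℕ) ≤ m by omega); omega⟩)
    (Finite.injective_iff_bijective.1 (by
      intro a b hab
      have hab' : v2 s ↑a = v2 s ↑b := by simpa [Fin.ext_iff] using hab
      by_contra hne
      have hne' : (a : ℕ) ≠ (b : ℕ) := fun e => hne (Fin.val_injective e)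
      have key : ∀ x y : Fin (m+1), (x:ℕ) < (y:ℕ) → v2 s ↑x ≠ v2 s ↑y := by
        intro x y hxy
        by_cases hd : (x:ℕ) < m ∧ sN s ↑x = true
        · exact (Nat.ne_of_lt (key2a s hxy (by omega) hd)).symm
        · exact Nat.ne_of_lt (key2b s hxy (by omega) hd)
      rcases Nat.lt_or_ge (a:ℕ) (b:ℕ) with hc | hc
      · exact key a b hc hab'
      · exact (key b a (by omega) hab'.symm)))

lemma pN_G2 {i : ℕ} (h : i ≤ m) : pN (G2 s) i = v2 s i := by
  rw [pN_eq _ (by omega : i < m+1)]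
  rfl

lemma dW_G2 : dW (G2 s) = s := by
  funext j
  have hj := j.isLt
  have hs : sN s ↑j = s j := by rw [sN_eq s hj]
  unfold dW
  rw [pN_G2 s (by omega), pN_G2 s (by omega)]
  by_cases hc : s j = true
  · have := key2a s (Nat.lt_succ_self (j:ℕ)) (by omega) ⟨hj, by rw [hs]; exact hc⟩
    simp [this, hc]
  · have hcf : s j = false := by simpa using hc
    have := key2b s (Nat.lt_succ_self (j:ℕ)) (by omega)
      (by rw [hs, hcf]; simp)
    simp [Nat.not_lt_of_lt this, hcf]

lemma not213v2 {i j k : ℕ} (hij : i < j) (hjk : j < k) (hkm : k ≤ m)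
    (h1 : v2 s j < v2 s i) (h2 : v2 s i < v2 s k) : False := by
  by_cases hd : i < m ∧ sN s i = true
  · exact absurd h2 (by have := key2a s (by omega : i < k) hkm hd; omega)
  · exact absurd h1 (by have := key2b s hij (by omega) hd; omega)

lemma not231v2 {i j k : ℕ} (hij : i < j) (hjk : j < k) (hkm : k ≤ m)
    (h1 : v2 s k < v2 s i) (h2 : v2 s i < v2 s j) : False := by
  by_cases hd : i < m ∧ sN s i = true
  · exact absurd h2 (by have := key2a s hij (by omega) hd; omega)
  · exact absurd h1 (by have := key2b s (by omega : i < k) hkm hd; omega)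

lemma G2_avoids : AvoidsAll (permWord (G2 s)) [[2,1,3],[2,3,1]] := by
  intro ρ hρ hC
  obtain ⟨f, hmono, hiff⟩ := hC
  simp only [List.mem_cons, List.not_mem_nil, or_false] at hρ
  have hlen := permWord_length (G2 s)
  rcases hρ with h | h <;> subst h
  · have h01 : (↑(f ⟨0, by norm_num⟩) : ℕ) < ↑(f ⟨1, by norm_num⟩) :=
      hmono (show (⟨0, by norm_num⟩ : Fin ([2,1,3] : List ℕ).length) < ⟨1, by norm_num⟩ by
        simp [Fin.lt_def])
    have h12 : (↑(f ⟨1, by norm_num⟩) : ℕ) < ↑(f ⟨2, by norm_num⟩) :=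
      hmono (show (⟨1, by norm_num⟩ : Fin ([2,1,3] : List ℕ).length) < ⟨2, by norm_num⟩ by
        simp [Fin.lt_def])
    have hm0 : (↑(f ⟨0, by norm_num⟩) : ℕ) ≤ m := by
      have := (f ⟨0, by norm_num⟩).isLt; omega
    have hm1 : (↑(f ⟨1, by norm_num⟩) : ℕ) ≤ m := by
      have := (f ⟨1, by norm_num⟩).isLt; omega
    have hm2 : (↑(f ⟨2, by norm_num⟩) : ℕ) ≤ m := by
      have := (f ⟨2, by norm_num⟩).isLt; omega
    have hji : pN (G2 s) ↑(f ⟨1, by norm_num⟩) < pN (G2 s) ↑(f ⟨0, by norm_num⟩) := by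
      have := (hiff ⟨1, by norm_num⟩ ⟨0, by norm_num⟩).1 (by decide)
      rw [permWord_get, permWord_get] at this
      omega
    have hik : pN (G2 s) ↑(f ⟨0, by norm_num⟩) < pN (G2 s) ↑(f ⟨2, by norm_num⟩) := by
      have := (hiff ⟨0, by norm_num⟩ ⟨2, by norm_num⟩).1 (by decide)
      rw [permWord_get, permWord_get] at this
      omega
    rw [pN_G2 s hm1, pN_G2 s hm0] at hji
    rw [pN_G2 s hm0, pN_G2 s hm2] at hik
    exact not213v2 s h01 h12 hm2 hji hik
  · have h01 : (↑(f ⟨0, by norm_num⟩) : ℕ) < ↑(f ⟨1, by norm_num⟩) :=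
      hmono (show (⟨0, by norm_num⟩ : Fin ([2,3,1] : List ℕ).length) < ⟨1, by norm_num⟩ by
        simp [Fin.lt_def])
    have h12 : (↑(f ⟨1, by norm_num⟩) : ℕ) < ↑(f ⟨2, by norm_num⟩) :=
      hmono (show (⟨1, by norm_num⟩ : Fin ([2,3,1] : List ℕ).length) < ⟨2, by norm_num⟩ by
        simp [Fin.lt_def])
    have hm0 : (↑(f ⟨0, by norm_num⟩) : ℕ) ≤ m := by
      have := (f ⟨0, by norm_num⟩).isLt; omega
    have hm1 : (↑(f ⟨1, by norm_num⟩) : ℕ) ≤ m := by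
      have := (f ⟨1, by norm_num⟩).isLt; omega
    have hm2 : (↑(f ⟨2, by norm_num⟩) : ℕ) ≤ m := by
      have := (f ⟨2, by norm_num⟩).isLt; omega
    have hki : pN (G2 s) ↑(f ⟨2, by norm_num⟩) < pN (G2 s) ↑(f ⟨0, by norm_num⟩) := by
      have := (hiff ⟨2, by norm_num⟩ ⟨0, by norm_num⟩).1 (by decide)
      rw [permWord_get, permWord_get] at this
      omega
    have hij : pN (G2 s) ↑(f ⟨0, by norm_num⟩) < pN (G2 s) ↑(f ⟨1, by norm_num⟩) := by
      have := (hiff ⟨0, by norm_num⟩ ⟨1, by norm_num⟩).1 (by decide)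
      rw [permWord_get, permWord_get] at this
      omega
    rw [pN_G2 s hm2, pN_G2 s hm0] at hki
    rw [pN_G2 s hm0, pN_G2 s hm1] at hij
    exact not231v2 s h01 h12 hm2 hki hij

end class2

section class2key
variable (π : Equiv.Perm (Fin (m+1)))

lemma tri (hA : AvoidsAll (permWord π) [[2,1,3],[2,3,1]]) {i : ℕ} (hi : i ≤ m) :
    (∀ j, i < j → j ≤ m → pN π j < pN π i) ∨ (∀ j, i < j → j ≤ m → pN π i < pN π j) := by
  by_contra hc
  push_neg at hc
  obtain ⟨⟨j, hj1, hj2, hj3⟩, ⟨k, hk1, hk2, hk3⟩⟩ := hc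
  have hj3' : pN π i < pN π j := by
    have : pN π j ≠ pN π i := fun e => by have := pN_inj π hj2 hi e; omega
    omega
  have hk3' : pN π k < pN π i := by
    have : pN π k ≠ pN π i := fun e => by have := pN_inj π hk2 hi e; omega
    omega
  rcases lt_trichotomy j k with hc' | hc' | hc'
  · exact hA [2,3,1] (by simp) (mk231 π hj1 hc' hk2 hk3' hj3')
  · rw [hc'] at hj3'; omega
  · exact hA [2,1,3] (by simp) (mk213 π hk1 hc' hj2 hk3' hj3')

lemma charac2 (hA : AvoidsAll (permWord π) [[2,1,3],[2,3,1]]) {i j : ℕ}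
    (hi : i ≤ m) (hj : j ≤ m) :
    pN π j < pN π i ↔
      ((j < i ∧ sN (dW π) j = false) ∨ ((i < m ∧ sN (dW π) i = true) ∧ i < j)) := by
  constructor
  · intro h
    by_contra hc
    push_neg at hc
    obtain ⟨hc1, hc2⟩ := hc
    rcases lt_trichotomy j i with hji | hji | hji
    · have hjm : j < m := by omega
      have hst : sN (dW π) j = true := by
        rcases Bool.eq_false_or_eq_true (sN (dW π) j) with h' | h'
        · exact h'
        · exact absurd h' (hc1 hji)
      have hdesc : pN π (j+1) < pN π j := (sN_dW_true π hjm).1 hst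
      rcases tri π hA (show j ≤ m by omega) with htri | htri
      · exact absurd (htri i hji hi) (by omega)
      · exact absurd (htri (j+1) (by omega) (by omega)) (by omega)
    · exact absurd h (by rw [hji]; exact lt_irrefl _)
    · have him : i < m := by omega
      have hsf : sN (dW π) i = false := by
        rcases Bool.eq_false_or_eq_true (sN (dW π) i) with h' | h'
        · exact absurd hji (by have := hc2 ⟨him, h'⟩; omega)
        · exact h'
      have hasc : pN π i < pN π (i+1) := (sN_dW_false π him).1 hsf
      rcases tri π hA hi with htri | htri
      · exact absurd (htri (i+1) (by omega) (by omega)) (by omega)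
      · exact absurd (htri j hji hj) (by omega)
  · intro h
    rcases h with ⟨hji, hsf⟩ | ⟨⟨him, hst⟩, hij⟩
    · have hjm : j < m := by omega
      have hasc : pN π j < pN π (j+1) := (sN_dW_false π hjm).1 hsf
      rcases tri π hA (show j ≤ m by omega) with htri | htri
      · exact absurd (htri (j+1) (by omega) (by omega)) (by omega)
      · exact htri i hji hi
    · have hdesc : pN π (i+1) < pN π i := (sN_dW_true π him).1 hst
      rcases tri π hA hi with htri | htri
      · exact htri j hij hj
      · exact absurd (htri (i+1) (by omega) (by omega)) (by omega)

lemma classKey2 (hA : AvoidsAll (permWord π) [[2,1,3],[2,3,1]]) :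
    π = G2 (dW π) := by
  have main : ∀ i : ℕ, i ≤ m → pN π i = v2 (dW π) i := by
    intro i hi
    rw [card_lt π hi]
    have hfe : (Finset.univ.filter fun x : Fin (m+1) => (π x : ℕ) < pN π i) =
        (Finset.univ.filter fun x : Fin (m+1) =>
          ((↑x < i ∧ sN (dW π) ↑x = false) ∨ ((i < m ∧ sN (dW π) i = true) ∧ i < ↑x))) := by
      apply Finset.filter_congr
      intro x _
      have hx : (π x : ℕ) = pN π ↑x := by rw [pN_eq π x.isLt]
      rw [hx]
      have := charac2 π hA hi (show (x:ℕ) ≤ m by have := x.isLt; omega)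
      simp [this]
    rw [hfe, finCard (m+1)
      (fun t => (t < i ∧ sN (dW π) t = false) ∨ ((i < m ∧ sN (dW π) i = true) ∧ i < t))]
    have hdle := dc_le (dW π) (i := i)
    have hcard : ((Finset.range i).filter fun t => sN (dW π) t = false).card = i - dc (dW π) i := by
      have hsplit := Finset.card_filter_add_card_filter_not
        (s := Finset.range i) (p := fun t => sN (dW π) t = true)
      have he : (Finset.range i).filter (fun t => ¬ sN (dW π) t = true) =
          (Finset.range i).filter (fun t => sN (dW π) t = false) := by
        apply Finset.filter_congr
        intro t _
        simp
      rw [he, Finset.card_range] at hsplit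
      have : dc (dW π) i = ((Finset.range i).filter fun t => sN (dW π) t = true).card := rfl
      omega
    by_cases hD : i < m ∧ sN (dW π) i = true
    · have hset : (Finset.range (m+1)).filter
            (fun t => (t < i ∧ sN (dW π) t = false) ∨ ((i < m ∧ sN (dW π) i = true) ∧ i < t)) =
          ((Finset.range i).filter fun t => sN (dW π) t = false) ∪ Finset.Ico (i+1) (m+1) := by
        ext t
        simp only [Finset.mem_filter, Finset.mem_range, Finset.mem_union, Finset.mem_Ico]
        constructor
        · rintro ⟨ht, ⟨h1, h2⟩ | ⟨_, h2⟩⟩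
          · exact Or.inl ⟨h1, h2⟩
          · exact Or.inr ⟨by omega, by omega⟩
        · rintro (⟨h1, h2⟩ | ⟨h1, h2⟩)
          · exact ⟨by omega, Or.inl ⟨h1, h2⟩⟩
          · exact ⟨by omega, Or.inr ⟨hD, by omega⟩⟩
      rw [hset, Finset.card_union_of_disjoint, hcard, Nat.card_Ico]
      · rw [v2, if_pos hD]; omega
      · rw [Finset.disjoint_left]
        intro t ht1 ht2
        simp only [Finset.mem_filter, Finset.mem_range] at ht1
        simp only [Finset.mem_Ico] at ht2
        omega
    · have hset : (Finset.range (m+1)).filter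
            (fun t => (t < i ∧ sN (dW π) t = false) ∨ ((i < m ∧ sN (dW π) i = true) ∧ i < t)) =
          ((Finset.range i).filter fun t => sN (dW π) t = false) := by
        ext t
        simp only [Finset.mem_filter, Finset.mem_range]
        constructor
        · rintro ⟨ht, ⟨h1, h2⟩ | ⟨h1, h2⟩⟩
          · exact ⟨h1, h2⟩
          · exact absurd h1 hD
        · rintro ⟨h1, h2⟩
          exact ⟨by omega, Or.inl ⟨h1, h2⟩⟩
      rw [hset, hcard, v2, if_neg hD]
  apply Equiv.ext
  intro x
  apply Fin.val_injective
  have hx := main ↑x (by have := x.isLt; omega)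
  rw [pN_eq π x.isLt] at hx
  rw [hx]
  rfl

end class2key
lemma count_glue (B : List (List ℕ)) (G : (Fin m → Bool) → Equiv.Perm (Fin (m+1)))
    (hGg : ∀ s, AvoidsAll (permWord (G s)) B)
    (hGd : ∀ s, dW (G s) = s)
    (hkey : ∀ π : Equiv.Perm (Fin (m+1)), AvoidsAll (permWord π) B → π = G (dW π)) (k : ℕ) :
    acount (m+1) k dascents B = binCount m k ∧ acount (m+1) k ddescents B = binCount m k := by
  constructor
  · unfold acount binCount
    refine Finset.card_bij (fun π _ => dW π) ?_ ?_ ?_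
    · intro π hπ
      simp only [Finset.mem_filter, Finset.mem_univ, true_and] at hπ ⊢
      rw [← dasc_eq]; exact hπ.2
    · intro π1 h1 π2 h2 he
      simp only [Finset.mem_filter, Finset.mem_univ, true_and] at h1 h2
      rw [hkey π1 h1.1, hkey π2 h2.1]
      exact congrArg G (by simpa using he)
    · intro s hs
      simp only [Finset.mem_filter, Finset.mem_univ, true_and] at hs
      refine ⟨G s, ?_, hGd s⟩
      simp only [Finset.mem_filter, Finset.mem_univ, true_and]
      exact ⟨hGg s, by rw [dasc_eq, hGd s]; exact hs⟩
  · unfold acount binCount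
    refine Finset.card_bij (fun π _ => fun j => ! dW π j) ?_ ?_ ?_
    · intro π hπ
      simp only [Finset.mem_filter, Finset.mem_univ, true_and] at hπ ⊢
      rw [← ddesc_eq]; exact hπ.2
    · intro π1 h1 π2 h2 he
      simp only [Finset.mem_filter, Finset.mem_univ, true_and] at h1 h2
      have he' : dW π1 = dW π2 := by
        funext j
        have := congrFun he j
        simpa using this
      rw [hkey π1 h1.1, hkey π2 h2.1]
      exact congrArg G he'
    · intro s hs
      simp only [Finset.mem_filter, Finset.mem_univ, true_and] at hs
      refine ⟨G (fun j => ! s j), ?_, ?_⟩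
      · simp only [Finset.mem_filter, Finset.mem_univ, true_and]
        refine ⟨hGg _, ?_⟩
        rw [ddesc_eq, hGd]
        have : (fun j => ! ! s j) = s := by funext j; simp
        rw [this]; exact hs
      · funext j
        have hb := congrFun (hGd (fun j => ! s j)) j
        show (! (dW (G fun j => ! s j) j)) = s j
        rw [hb, Bool.not_not]

end S10

theorem stmt10 (n k : ℕ) (hn : 1 ≤ n) :
    acount n k dascents [[1,3,2],[2,1,3]] = binCount (n - 1) k ∧
    acount n k ddescents [[1,3,2],[2,1,3]] = binCount (n - 1) k ∧
    acount n k dascents [[2,1,3],[2,3,1]] = binCount (n - 1) k ∧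
    acount n k ddescents [[2,1,3],[2,3,1]] = binCount (n - 1) k := by
  obtain ⟨m, rfl⟩ : ∃ m, n = m + 1 := ⟨n - 1, by omega⟩
  have h1 := S10.count_glue (m := m) [[1,3,2],[2,1,3]] S10.G1 (fun s => S10.G1_avoids s)
    (fun s => S10.dW_G1 s) (fun π hA => S10.classKey1 π hA) k
  have h2 := S10.count_glue (m := m) [[2,1,3],[2,3,1]] S10.G2 (fun s => S10.G2_avoids s)
    (fun s => S10.dW_G2 s) (fun π hA => S10.classKey2 π hA) k
  simpa using ⟨h1.1, h1.2, h2.1, h2.2⟩
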